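/- Let f ∈ Lie_n[x,y] be homogeneous of depth r ≥ 1 (every monomial of f contains exactly r letters y). Then the mould ma_f satisfies mantar(ma_f) = ma_f, i.e. ma_f^r(u_1,…,u_r) = (−1)^{r−1}·ma_f^r(u_r,…,u_1) as polynomials in ℚ[u_1,…,u_r]. -/

import Mathlib

/- Common setup: the ring ℚ⟨x,y⟩ of polynomials in two non-commuting variables,
   modelled as the monoid algebra of the free monoid on two letters
   (letter 0 ↦ x, letter 1 ↦ y). -/

abbrev Word := FreeMonoid (Fin 2)
abbrev R2 := MonoidAlgebra ℚ Word

noncomputable section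
namespace DblSh

attribute [local instance] LieRing.ofAssociativeRing

/-- The variable x. -/
def X : R2 := MonoidAlgebra.of ℚ Word (FreeMonoid.of 0)
/-- The variable y. -/
def Y : R2 := MonoidAlgebra.of ℚ Word (FreeMonoid.of 1)
/-- The monomial associated to a word. -/
def mono (w : Word) : R2 := MonoidAlgebra.single w 1
/-- (f|w), the coefficient of the monomial w in f. -/
def coeff (f : R2) (w : Word) : ℚ := f.coeff w
/-- The pairing (f|g) = Σ_w (g|w)·(f|w), i.e. (f|·) extended linearly. -/
def pairing (f g : R2) : ℚ := Finsupp.sum g.coeff (fun w c => c * f.coeff w)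
/-- Degree of a word. -/
def wlen (w : Word) : ℕ := (FreeMonoid.toList w).length
/-- Depth of a word: the number of letters y. -/
def countY (w : Word) : ℕ := (FreeMonoid.toList w).count 1

/-- Lie[x,y]: the Lie subalgebra of ℚ⟨x,y⟩ generated by x and y (the free Lie algebra). -/
def LieP : LieSubalgebra ℚ R2 := LieSubalgebra.lieSpan ℚ R2 {X, Y}
/-- f is homogeneous of degree n. -/
def IsHomog (n : ℕ) (f : R2) : Prop := ∀ w ∈ f.coeff.support, wlen w = n
/-- f ∈ Lie_n[x,y]. -/
def InLieN (n : ℕ) (f : R2) : Prop := f ∈ LieP ∧ IsHomog n f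

/-- `anti` on words: reversal. -/
def antiW (w : Word) : Word := FreeMonoid.ofList (FreeMonoid.toList w).reverse
/-- The linear operator `anti` reversing each monomial. -/
def anti (f : R2) : R2 := MonoidAlgebra.mapDomain antiW f
/-- f (homogeneous of degree m) is antipalindromic: f = (−1)^m · anti f. -/
def Antipal (m : ℕ) (f : R2) : Prop := f = ((-1 : ℚ))^m • anti f

/-- `push` on a word containing at least one y:
    push(x^{a₀}y⋯y x^{a_{r-1}} y x^{a_r}) = x^{a_r} y x^{a₀} y ⋯ y x^{a_{r-1}};
    words with no y are left fixed. -/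
def pushW (w : Word) : Word :=
  let l := (FreeMonoid.toList w).reverse
  let t := l.takeWhile (fun c => c = 0)
  match l.dropWhile (fun c => c = 0) with
  | [] => w
  | _ :: rest => FreeMonoid.ofList (t.reverse ++ (1 :: rest.reverse))
/-- `push` extended linearly to polynomials. -/
def pushP (f : R2) : R2 := MonoidAlgebra.mapDomain pushW f
/-- The list Push(w) of the r+1 iterates of push on w (r = depth of w). -/
def PushList (w : Word) : List Word := (List.range (countY w + 1)).map (fun k => pushW^[k] w)
/-- The word y^m. -/
def yPow (m : ℕ) : Word := FreeMonoid.ofList (List.replicate m 1)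
/-- f (homogeneous of degree m) is push-constant for the constant A. -/
def PushConst (m : ℕ) (f : R2) (A : ℚ) : Prop :=
  coeff f (yPow m) = 0 ∧
  ∀ w : Word, wlen w = m → w ≠ yPow m → ((PushList w).map (fun v => coeff f v)).sum = A

/-- ∂_x on a word (Leibniz expansion). -/
def dxW (w : Word) : R2 :=
  ∑ i ∈ Finset.range (wlen w),
    if (FreeMonoid.toList w).getD i 1 = 0
    then mono (FreeMonoid.ofList ((FreeMonoid.toList w).eraseIdx i)) else 0
/-- The derivation ∂_x of ℚ⟨x,y⟩, with ∂_x(x) = 1 and ∂_x(y) = 0. -/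
def dx (f : R2) : R2 := Finsupp.sum f.coeff (fun w c => c • dxW w)
/-- s(h) = Σ_{i≥0} ((−1)^i/i!)·∂_x^i(h)·y·x^i. -/
def sMap (h : R2) : R2 := ∑ᶠ i : ℕ, ((-1 : ℚ)^i / (i.factorial : ℚ)) • (dx^[i] h * Y * X ^ i)
/-- s'(h) = Σ_{i≥0} ((−1)^i/i!)·x^i·y·∂_x^i(h). -/
def s'Map (h : R2) : R2 := ∑ᶠ i : ℕ, ((-1 : ℚ)^i / (i.factorial : ℚ)) • (X ^ i * Y * dx^[i] h)

/-- The algebra endomorphism of ℚ⟨x,y⟩ with x ↦ a, y ↦ b. -/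
def subst (a b : R2) : R2 →ₐ[ℚ] R2 :=
  MonoidAlgebra.lift ℚ R2 Word (FreeMonoid.lift (fun i : Fin 2 => if i = 0 then a else b))

/-- The value on a word of the derivation of ℚ⟨x,y⟩ with x ↦ a, y ↦ b (Leibniz expansion). -/
def derW (a b : R2) (w : Word) : R2 :=
  ∑ i ∈ Finset.range (wlen w),
    mono (FreeMonoid.ofList ((FreeMonoid.toList w).take i)) *
      (if (FreeMonoid.toList w).getD i 1 = 0 then a else b) *
      mono (FreeMonoid.ofList ((FreeMonoid.toList w).drop (i+1)))
/-- The derivation of ℚ⟨x,y⟩ with x ↦ a, y ↦ b. -/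
def derP (a b : R2) (f : R2) : R2 := Finsupp.sum f.coeff (fun w c => c • derW a b w)
/-- The derivation D_{F,G} with x ↦ [x,G], y ↦ [y,F]. -/
def DFG (F G : R2) : R2 → R2 := derP (X * G - G * X) (Y * F - F * Y)

/-- The subspace of ℚ⟨x,y⟩ spanned by all commutators ab − ba. -/
def trIdeal : Submodule ℚ R2 := Submodule.span ℚ {c : R2 | ∃ a b : R2, c = a * b - b * a}
/-- TR, the trace space. -/
abbrev TRsp := R2 ⧸ trIdeal
/-- The trace map tr : ℚ⟨x,y⟩ → TR. -/
def trQ : R2 →ₗ[ℚ] TRsp := trIdeal.mkQ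

/-- Generators of krv2: the special derivations D_{F,G}, F,G ∈ Lie_n[x,y] (n ≥ 1),
    satisfying the trace condition tr(F_y·y + G_x·x) = A·tr((x+y)^n − x^n − y^n). -/
def krvGens : Set (R2 → R2) :=
  {D | ∃ n : ℕ, 1 ≤ n ∧ ∃ F G : R2, InLieN n F ∧ InLieN n G ∧ D = DFG F G ∧
    (X * G - G * X) + (Y * F - F * Y) = 0 ∧
    ∃ Fx Fy Gx Gy : R2, F = Fx * X + Fy * Y ∧ G = Gx * X + Gy * Y ∧
      ∃ A : ℚ, trQ (Fy * Y + Gx * X) = A • trQ ((X + Y)^n - X^n - Y^n)}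
/-- The Kashiwara–Vergne Lie algebra krv2, as a space of operators. -/
def krv2 : Submodule ℚ (R2 → R2) := Submodule.span ℚ krvGens

/-- The space V_kv of Theorem 1.2. -/
def Vkv : Submodule ℚ R2 :=
  Submodule.span ℚ {F : R2 | ∃ n : ℕ, 3 ≤ n ∧ InLieN n F ∧
    ∃ Fx Fy : R2, F = Fx * X + Fy * Y ∧ Antipal (n-1) Fy ∧ ∃ A : ℚ, PushConst (n-1) (Fy - Fx) A}

/-- y_i = x^{i-1}y. -/
def yi (i : ℕ) : Word := FreeMonoid.ofList (List.replicate (i - 1) 0 ++ [1])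
/-- The word y_{i₁}⋯y_{i_k} associated to a composition (i₁,…,i_k). -/
def wordOfComp (l : List ℕ) : Word := (l.map yi).prod
/-- The stuffle product of two words ending in y, encoded as compositions. -/
def st : List ℕ → List ℕ → R2
  | [], v => mono (wordOfComp v)
  | u, [] => mono (wordOfComp u)
  | i :: u, j :: v =>
      mono (yi i) * st u (j :: v) + mono (yi j) * st (i :: u) v + mono (yi (i + j)) * st u v
termination_by u v => u.length + v.length

/-- Membership in the double shuffle Lie algebra ds. -/
def inDS (f : R2) : Prop :=
  f ∈ LieP ∧ (∀ w ∈ f.coeff.support, 3 ≤ wlen w) ∧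
  ∀ u v : List ℕ, u ≠ [] → v ≠ [] → (∀ i ∈ u, 1 ≤ i) → (∀ i ∈ v, 1 ≤ i) →
    ¬((∀ i ∈ u, i = 1) ∧ (∀ i ∈ v, i = 1)) → pairing f (st u v) = 0
/-- Membership in ds_n = ds ∩ Lie_n[x,y]. -/
def inDSn (n : ℕ) (f : R2) : Prop := inDS f ∧ IsHomog n f

/-- The derivation D_f with x ↦ 0, y ↦ [y,f]. -/
def Dlow (f : R2) : R2 → R2 := derP 0 (Y * f - f * Y)
/-- The Poisson bracket {f,g} = [f,g] + D_f(g) − D_g(f). -/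
def poisson (f g : R2) : R2 := (f * g - g * f) + Dlow f g - Dlow g f

/-- The projection f ↦ f^x, where f = x·f^x + y·f^y (f without constant term). -/
def compL (f : R2) : R2 :=
  MonoidAlgebra.ofCoeff (Finsupp.comapDomain (fun w : Word => FreeMonoid.of 0 * w) f.coeff
    (Set.injOn_of_injective (mul_right_injective (FreeMonoid.of 0))))

/-- f is homogeneous of depth r. -/
def IsDepth (r : ℕ) (f : R2) : Prop := ∀ w ∈ f.coeff.support, countY w = r
/-- The x-run lengths (a₀,…,a_r) of a word x^{a₀}y x^{a₁}⋯y x^{a_r}. -/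
def xRuns (w : Word) : List ℕ := ((FreeMonoid.toList w).splitOn 1).map List.length
/-- vimo_f^r(z₀,…,z_r) = Σ_e a_e z₀^{e₀}⋯z_r^{e_r} for f = Σ_e a_e x^{e₀}y⋯y x^{e_r}. -/
def vimo (r : ℕ) (f : R2) : MvPolynomial (Fin (r+1)) ℚ :=
  Finsupp.sum f.coeff (fun w c => c • ∏ j : Fin (r+1), (MvPolynomial.X j) ^ ((xRuns w).getD (j : ℕ) 0))
/-- ma_f^r(u₁,…,u_r) = vimo_f^r(0, u₁, u₁+u₂, …, u₁+⋯+u_r). -/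
def maOf (r : ℕ) (f : R2) : MvPolynomial (Fin r) ℚ :=
  MvPolynomial.aeval
    (fun j : Fin (r+1) =>
      ∑ i ∈ Finset.univ.filter (fun i : Fin r => (i : ℕ) < (j : ℕ)), MvPolynomial.X i)
    (vimo r f)

-- ===== auxiliary development for stmt15 =====




-- basic mono lemmas
lemma mono_mul (u v : Word) : mono u * mono v = mono (u * v) := by
  simp [mono, MonoidAlgebra.single_mul_single]

lemma mono_one : mono 1 = 1 := rfl

lemma mono_ofList_cons (a : Fin 2) (t : List (Fin 2)) :
    mono (FreeMonoid.ofList (a :: t)) = mono (FreeMonoid.of a) * mono (FreeMonoid.ofList t) := by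
  rw [mono_mul]; rfl

lemma X_eq : X = mono (FreeMonoid.of 0) := rfl
lemma Y_eq : Y = mono (FreeMonoid.of 1) := rfl

section Hom
variable {B : Type*} [Semiring B] [Algebra ℚ B]

/-- the algebra hom determined by images of x,y -/
def hom2 (a b : B) : R2 →ₐ[ℚ] B :=
  MonoidAlgebra.lift ℚ B Word (FreeMonoid.lift (fun i : Fin 2 => if i = 0 then a else b))

lemma hom2_mono (a b : B) (w : Word) :
    hom2 a b (mono w) = ((FreeMonoid.toList w).map (fun i : Fin 2 => if i = 0 then a else b)).prod := by
  simp [hom2, mono, MonoidAlgebra.lift_single, FreeMonoid.lift_apply]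

lemma hom2_X (a b : B) : hom2 a b X = a := by
  rw [X_eq, hom2_mono]; simp

lemma hom2_Y (a b : B) : hom2 a b Y = b := by
  rw [Y_eq, hom2_mono]; simp

lemma algHom_ext2 {φ ψ : R2 →ₐ[ℚ] B} (hX : φ X = ψ X) (hY : φ Y = ψ Y) : φ = ψ := by
  apply MonoidAlgebra.algHom_ext
  intro w
  induction w using FreeMonoid.recOn with
  | one => rw [← MonoidAlgebra.one_def, map_one, map_one]
  | of_mul a t iht =>
      have : MonoidAlgebra.single (FreeMonoid.of a * t) (1:ℚ)
          = MonoidAlgebra.single (FreeMonoid.of a) 1 * MonoidAlgebra.single t 1 := by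
        simp [MonoidAlgebra.single_mul_single]
      rw [this, map_mul, map_mul, iht]
      congr 1
      match a with
      | 0 => exact hX
      | 1 => exact hY
  exact Subsingleton.elim _ _
end Hom

section Runs
variable {A : Type*} [CommRing A]

/-- x-run lengths of a letter list -/
def xr (l : List (Fin 2)) : List ℕ := (l.splitOn 1).map List.length

lemma xr_nil : xr ([] : List (Fin 2)) = [0] := rfl

lemma xr_ne_nil (l : List (Fin 2)) : xr l ≠ [] := by
  have := List.splitOnP_ne_nil (fun a => a == 1) l
  simp only [xr, List.splitOn, ne_eq, List.map_eq_nil_iff]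
  exact this

lemma xr_cons_one (t : List (Fin 2)) : xr ((1:Fin 2) :: t) = 0 :: xr t := by
  simp [xr, List.splitOn, List.splitOnP_cons]

lemma xr_cons_zero (t : List (Fin 2)) {c : ℕ} {cs : List ℕ} (h : xr t = c :: cs) :
    xr ((0:Fin 2) :: t) = (c + 1) :: cs := by
  rcases hsp : t.splitOn 1 with _ | ⟨p, ps⟩
  · exact absurd hsp (by have := List.splitOnP_ne_nil (fun a => a == 1) t; simpa [List.splitOn] using this)
  · have h' : p.length = c ∧ ps.map List.length = cs := by
      have : xr t = p.length :: ps.map List.length := by simp [xr, hsp]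
      rw [h] at this; exact ⟨(List.cons.injEq _ _ _ _ ▸ this).1.symm, ((List.cons.injEq _ _ _ _ ▸ this).2).symm⟩
    have : ((0:Fin 2) :: t).splitOn 1 = (0 :: p) :: ps := by
      simp [List.splitOn, List.splitOnP_cons] at hsp ⊢
      simp [hsp]
    simp [xr, this, h'.1, h'.2]

/-- recursive evaluation of the run product -/
def runProd (v : ℕ → A) : List (Fin 2) → A
  | [] => 1
  | a :: t => if a = 0 then v 0 * runProd v t else runProd (fun k => v (k+1)) t

lemma runProd_eq (l : List (Fin 2)) : ∀ (v : ℕ → A),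
    runProd v l = ∏ j ∈ Finset.range (l.count 1 + 1), v j ^ ((xr l).getD j 0) := by
  induction l with
  | nil => intro v; simp [runProd, xr_nil]
  | cons a t ih =>
      intro v
      match a with
      | 1 =>
        rw [runProd, if_neg (by decide), ih, xr_cons_one]
        rw [List.count_cons_self, Finset.prod_range_succ' (fun j => v j ^ ((0 :: xr t).getD j 0))]
        simp
      | 0 =>
        rw [runProd, if_pos rfl, ih]
        obtain ⟨c, cs, hx⟩ : ∃ c cs, xr t = c :: cs := by
          rcases h : xr t with _ | ⟨c, cs⟩
          · exact absurd h (xr_ne_nil t)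
          · exact ⟨c, cs, rfl⟩
        rw [xr_cons_zero t hx, hx]
        have hc : ((0:Fin 2) :: t).count 1 = t.count 1 := by simp
        rw [hc]
        rw [Finset.prod_range_succ' (fun j => v j ^ ((c :: cs).getD j 0)),
            Finset.prod_range_succ' (fun j => v j ^ (((c + 1) :: cs).getD j 0))]
        simp only [List.getD_cons_succ, List.getD_cons_zero]
        rw [pow_succ]
        ring
end Runs

lemma count01 (l : List (Fin 2)) : l.count 0 + l.count 1 = l.length := by
  induction l with
  | nil => simp
  | cons a t ih =>
      match a with
      | 0 => simp [List.count_cons, ih.symm]; omega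
      | 1 => simp [List.count_cons, ih.symm]; omega


section Mat
variable {A : Type*} [CommRing A] [Algebra ℚ A] {m : ℕ}

abbrev Mat (A : Type*) (m : ℕ) := Matrix (Fin (m+1)) (Fin (m+1)) A

def Nmat : Mat A m := Matrix.of fun i j => if (j : ℕ) = (i : ℕ) + 1 then 1 else 0

def mu (v : Fin (m+1) → A) : R2 →ₐ[ℚ] Mat A m := hom2 (Matrix.diagonal v) Nmat

lemma mu_X (v : Fin (m+1) → A) : mu v X = Matrix.diagonal v := hom2_X _ _
lemma mu_Y (v : Fin (m+1) → A) : mu v Y = Nmat := hom2_Y _ _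

omit [Algebra ℚ A] in
lemma Nmat_mul_apply (M : Mat A m) (p q : Fin (m+1)) (hp : (p : ℕ) + 1 ≤ m) :
    ((Nmat : Mat A m) * M) p q = M ⟨(p : ℕ) + 1, by omega⟩ q := by
  rw [Matrix.mul_apply]
  rw [Finset.sum_eq_single (⟨(p : ℕ) + 1, by omega⟩ : Fin (m+1))]
  · simp [Nmat]
  · intro b _ hb
    have : ((b : ℕ) = (p : ℕ) + 1) = False := by
      simp only [eq_iff_iff, iff_false]
      intro h; exact hb (Fin.ext h)
    simp [Nmat, this]
  · simp

/-- entry formula for mu on a monomial -/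
lemma mu_mono_entry (u : ℕ → A) (l : List (Fin 2)) : ∀ (p q : Fin (m+1)),
    (q : ℕ) = (p : ℕ) + l.count 1 →
    (mu (fun j => u j) (mono (FreeMonoid.ofList l))) p q = runProd (fun k => u ((p : ℕ) + k)) l := by
  induction l with
  | nil =>
      intro p q hq
      have : q = p := Fin.ext (by simpa using hq)
      subst this
      show (mu _ (mono 1)) q q = 1
      rw [mono_one, map_one, Matrix.one_apply_eq]
  | cons a t ih =>
      intro p q hq
      rw [mono_ofList_cons, map_mul]
      match a with
      | 0 =>
          have hYc : ((0:Fin 2) :: t).count 1 = t.count 1 := by simp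
          rw [hYc] at hq
          have hx : (mu (fun j => u j) (mono (FreeMonoid.of 0))) = Matrix.diagonal (fun j : Fin (m+1) => u j) := by
            rw [← X_eq, mu_X]
          rw [hx, Matrix.diagonal_mul, ih p q hq]
          show _ = runProd _ (0 :: t)
          rw [runProd, if_pos rfl]
          simp
      | 1 =>
          have hYc : ((1:Fin 2) :: t).count 1 = t.count 1 + 1 := by simp
          rw [hYc] at hq
          have hp1 : (p : ℕ) + 1 ≤ m := by have := q.isLt; omega
          have hy : (mu (fun j => u j) (mono (FreeMonoid.of 1))) = (Nmat : Mat A m) := by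
            rw [← Y_eq, mu_Y]
          rw [hy, Nmat_mul_apply _ _ _ hp1]
          rw [ih ⟨(p:ℕ)+1, by omega⟩ q (by simp; omega)]
          show _ = runProd _ (1 :: t)
          rw [runProd, if_neg (by decide)]
          congr 1
          funext k
          congr 1
          simp only [Fin.val_mk]
          omega
end Mat

section Sign
variable {B : Type*} [Semiring B] [Algebra ℚ B]

lemma algHom_apply_eq_sum (φ : R2 →ₐ[ℚ] B) (f : R2) :
    φ f = f.coeff.sum (fun w c => c • φ (mono w)) := by
  conv_lhs => rw [← MonoidAlgebra.sum_coeff_single f]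
  rw [map_finsuppSum]
  apply Finsupp.sum_congr
  intro w _
  rw [← map_smul]
  congr 1
  rw [mono, MonoidAlgebra.smul_single', mul_one]

lemma sum_smul_mono (f : R2) : f.coeff.sum (fun w c => c • mono w) = f := by
  conv_rhs => rw [← MonoidAlgebra.sum_coeff_single f]
  apply Finsupp.sum_congr
  intro w _
  rw [mono, MonoidAlgebra.smul_single', mul_one]

lemma hom2_sigma_mono (l : List (Fin 2)) :
    hom2 (-X) (-Y) (mono (FreeMonoid.ofList l)) = ((-1:ℚ))^l.length • mono (FreeMonoid.ofList l) := by
  induction l with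
  | nil => simp [mono_one]
  | cons a t ih =>
      rw [mono_ofList_cons, map_mul, ih]
      have ha : hom2 (-X) (-Y) (mono (FreeMonoid.of a)) = -(mono (FreeMonoid.of a)) := by
        match a with
        | 0 => rw [← X_eq, hom2_X]
        | 1 => rw [← Y_eq, hom2_Y]
      rw [ha]
      rw [neg_mul, mul_smul_comm, List.length_cons, pow_succ]
      rw [← neg_smul]
      congr 1
      ring

lemma hom2_nu_mono (l : List (Fin 2)) :
    hom2 (-X) Y (mono (FreeMonoid.ofList l)) = ((-1:ℚ))^(l.count 0) • mono (FreeMonoid.ofList l) := by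
  induction l with
  | nil => simp [mono_one]
  | cons a t ih =>
      rw [mono_ofList_cons, map_mul, ih]
      match a with
      | 0 =>
          have ha : hom2 (-X) Y (mono (FreeMonoid.of 0)) = -(mono (FreeMonoid.of 0)) := by
            rw [← X_eq, hom2_X]
          rw [ha, neg_mul, mul_smul_comm]
          have hc : ((0:Fin 2) :: t).count 0 = t.count 0 + 1 := by simp
          rw [hc, pow_succ, ← neg_smul]
          congr 1
          ring
      | 1 =>
          have ha : hom2 (-X) Y (mono (FreeMonoid.of 1)) = mono (FreeMonoid.of 1) := by
            rw [← Y_eq, hom2_Y]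
          rw [ha, mul_smul_comm]
          have hc : ((1:Fin 2) :: t).count 0 = t.count 0 := by simp
          rw [hc]
end Sign


lemma mem_of_XY {S : LieSubalgebra ℚ R2} (hX : X ∈ S) (hY : Y ∈ S) {f : R2} (hf : f ∈ LieP) :
    f ∈ S := by
  have h : LieP ≤ S := by
    apply LieSubalgebra.lieSpan_le.mpr
    rintro z hz
    rcases hz with rfl | hz
    · exact hX
    · rw [Set.mem_singleton_iff] at hz; subst hz; exact hY
  exact h hf

section Closure
variable {A : Type*} [CommRing A] [Algebra ℚ A] {m : ℕ}

omit [Algebra ℚ A] in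
lemma diag_const (c : A) : Matrix.diagonal (fun _ : Fin (m+1) => c) = c • (1 : Mat A m) := by
  ext i j
  by_cases h : i = j <;> simp [Matrix.diagonal_apply, Matrix.one_apply, h]

lemma mu_translation (u : Fin (m+1) → A) (c : A) {f : R2} (hf : f ∈ LieP) :
    ∃ t : A, mu (fun j => u j + c) f = mu u f + t • (1 : Mat A m) := by
  let S : LieSubalgebra ℚ R2 := {
    carrier := {g | ∃ t : A, mu (fun j => u j + c) g = mu u g + t • (1 : Mat A m)}
    add_mem' := by
      rintro a b ⟨s, hs⟩ ⟨t, ht⟩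
      exact ⟨s + t, by rw [map_add, map_add, hs, ht, add_smul]; abel⟩
    zero_mem' := ⟨0, by simp⟩
    smul_mem' := by
      rintro q a ⟨s, hs⟩
      exact ⟨q • s, by rw [map_smul, map_smul, hs, smul_add, smul_assoc]⟩
    lie_mem' := by
      rintro a b ⟨s, hs⟩ ⟨t, ht⟩
      refine ⟨0, ?_⟩
      show mu (fun j => u j + c) (a * b - b * a) = mu u (a * b - b * a) + 0 • 1
      rw [map_sub, map_sub, map_mul, map_mul, map_mul, map_mul, hs, ht]
      simp only [add_mul, mul_add, smul_mul_assoc, mul_smul_comm, smul_add, smul_smul, one_mul, mul_one,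
        zero_smul, add_zero]
      rw [mul_comm s t]
      abel }
  exact mem_of_XY (S := S)
    ⟨c, by rw [mu_X, mu_X, ← diag_const, ← Matrix.diagonal_add]⟩
    ⟨0, by rw [mu_Y, mu_Y]; simp⟩ hf

def gam (M : Mat A m) : Mat A m := (Matrix.transpose M).submatrix Fin.revPerm Fin.revPerm

omit [Algebra ℚ A] in
lemma gam_apply (M : Mat A m) (i j : Fin (m+1)) : gam M i j = M (Fin.rev j) (Fin.rev i) := rfl

omit [Algebra ℚ A] in
lemma gam_mul (M N : Mat A m) : gam (M * N) = gam N * gam M := by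
  unfold gam
  rw [Matrix.transpose_mul, ← Matrix.submatrix_mul_equiv (Matrix.transpose N) (Matrix.transpose M) _ Fin.revPerm _]

omit [Algebra ℚ A] in
lemma gam_sub (M N : Mat A m) : gam (M - N) = gam M - gam N := rfl

omit [Algebra ℚ A] in
lemma gam_neg (M : Mat A m) : gam (- M) = - gam M := rfl

omit [Algebra ℚ A] in
lemma gam_diagonal (v : Fin (m+1) → A) :
    gam (Matrix.diagonal v) = Matrix.diagonal (fun j => v (Fin.rev j)) := by
  ext i j
  rw [gam_apply]
  by_cases h : i = j
  · subst h; simp [Matrix.diagonal_apply]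
  · have h' : ¬ (Fin.rev j = Fin.rev i) := fun hc => h (by simpa using (Fin.rev_inj.mp hc).symm)
    rw [Matrix.diagonal_apply_ne _ h', Matrix.diagonal_apply_ne _ h]

omit [Algebra ℚ A] in
lemma gam_Nmat : gam (Nmat : Mat A m) = Nmat := by
  ext i j
  rw [gam_apply]
  simp only [Nmat, Matrix.of_apply]
  have hi := i.isLt
  have hj := j.isLt
  have h2 : ((Fin.rev i : ℕ) = (Fin.rev j : ℕ) + 1) ↔ ((j : ℕ) = (i : ℕ) + 1) := by
    simp only [Fin.val_rev]
    omega
  by_cases h : (j : ℕ) = (i : ℕ) + 1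
  · rw [if_pos (h2.mpr h), if_pos h]
  · rw [if_neg (fun hc => h (h2.mp hc)), if_neg h]

lemma mu_reversal (v : Fin (m+1) → A) {f : R2} (hf : f ∈ LieP) :
    mu (fun j => v (Fin.rev j)) f = - gam (mu v (hom2 (-X) (-Y) f)) := by
  let S : LieSubalgebra ℚ R2 := {
    carrier := {g | mu (fun j => v (Fin.rev j)) g = - gam (mu v (hom2 (-X) (-Y) g))}
    add_mem' := by
      intro a b ha hb
      simp only [Set.mem_setOf_eq] at ha hb ⊢
      rw [map_add, map_add, map_add, ha, hb]
      ext i j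
      simp only [Matrix.add_apply, Matrix.neg_apply, gam_apply]
      ring
    zero_mem' := by
      show mu _ (0 : R2) = - gam (mu v (hom2 (-X) (-Y) (0:R2)))
      rw [map_zero, map_zero, map_zero]
      ext i j
      simp [gam_apply]
    smul_mem' := by
      intro q a ha
      simp only [Set.mem_setOf_eq] at ha ⊢
      rw [map_smul, map_smul, map_smul, ha]
      ext i j
      simp [gam_apply, Matrix.smul_apply]
    lie_mem' := by
      intro a b ha hb
      simp only [Set.mem_setOf_eq] at ha hb ⊢
      show mu _ (a * b - b * a) = - gam (mu v (hom2 (-X) (-Y) (a * b - b * a)))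
      simp only [map_sub, map_mul, ha, hb, gam_sub, gam_mul]
      noncomm_ring }
  refine mem_of_XY (S := S) ?_ ?_ hf
  · show mu _ X = - gam (mu v (hom2 (-X) (-Y) X))
    rw [mu_X, hom2_X, map_neg, mu_X, gam_neg, gam_diagonal, neg_neg]
  · show mu _ Y = - gam (mu v (hom2 (-X) (-Y) Y))
    rw [mu_Y, hom2_Y, map_neg, mu_Y, gam_neg, gam_Nmat, neg_neg]
end Closure

section Homog

def IsHomog' (n : ℕ) (f : R2) : Prop := ∀ w ∈ f.coeff.support, (FreeMonoid.toList w).length = n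
def IsDepth' (r : ℕ) (f : R2) : Prop := ∀ w ∈ f.coeff.support, (FreeMonoid.toList w).count 1 = r

lemma sigma_homog {n : ℕ} {f : R2} (h : IsHomog' n f) :
    hom2 (-X) (-Y) f = ((-1:ℚ))^n • f := by
  rw [algHom_apply_eq_sum]
  conv_rhs => rw [← sum_smul_mono f]
  rw [Finsupp.smul_sum]
  apply Finsupp.sum_congr
  intro w hw
  have hw' : w = FreeMonoid.ofList (FreeMonoid.toList w) := rfl
  rw [hw', hom2_sigma_mono, h w hw]
  rw [smul_comm]

lemma nu_homog {n r : ℕ} {f : R2} (h1 : IsHomog' n f) (h2 : IsDepth' r f) :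
    hom2 (-X) Y f = ((-1:ℚ))^(n - r) • f := by
  rw [algHom_apply_eq_sum]
  conv_rhs => rw [← sum_smul_mono f]
  rw [Finsupp.smul_sum]
  apply Finsupp.sum_congr
  intro w hw
  have hw' : w = FreeMonoid.ofList (FreeMonoid.toList w) := rfl
  have hcount : (FreeMonoid.toList w).count 0 = n - r := by
    have := count01 (FreeMonoid.toList w)
    rw [h1 w hw, h2 w hw] at this
    omega
  rw [hw', hom2_nu_mono, hcount]
  rw [smul_comm]

end Homog

section MuComp
variable {A : Type*} [CommRing A] [Algebra ℚ A] {A' : Type*} [CommRing A'] [Algebra ℚ A'] {m : ℕ}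

lemma mu_neg (z : Fin (m+1) → A) : mu (fun j => - z j) = (mu z).comp (hom2 (-X) Y) := by
  apply algHom_ext2
  · rw [mu_X, AlgHom.comp_apply, hom2_X, map_neg, mu_X, Matrix.diagonal_neg]
  · rw [mu_Y, AlgHom.comp_apply, hom2_Y, mu_Y]

lemma mapMatrix_mu (φ : A →ₐ[ℚ] A') (v : Fin (m+1) → A) :
    (AlgHom.mapMatrix φ (m := Fin (m+1))).comp (mu v) = mu (fun j => φ (v j)) := by
  apply algHom_ext2
  · rw [AlgHom.comp_apply, mu_X, mu_X, AlgHom.mapMatrix_apply, Matrix.diagonal_map (map_zero φ)]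
  · rw [AlgHom.comp_apply, mu_Y, mu_Y, AlgHom.mapMatrix_apply]
    ext i j
    simp only [Matrix.map_apply, Nmat, Matrix.of_apply, apply_ite φ, map_one, map_zero]
end MuComp


/-- prefix sums of the variables -/
def uu (r k : ℕ) : MvPolynomial (Fin r) ℚ :=
  ∑ i ∈ Finset.univ.filter (fun i : Fin r => (i : ℕ) < k), MvPolynomial.X i

lemma maOf_eq_entry (r : ℕ) (f : R2) (hdepth : IsDepth r f) :
    maOf r f = (mu (fun j : Fin (r+1) => uu r (j : ℕ)) f) 0 (Fin.last r) := by
  rw [maOf, vimo, map_finsuppSum, algHom_apply_eq_sum (mu _) f]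
  rw [Finsupp.sum, Finsupp.sum, Matrix.sum_apply]
  apply Finset.sum_congr rfl
  intro w hw
  rw [Matrix.smul_apply]
  rw [map_smul]
  congr 1
  -- aeval of the monomial = matrix entry
  rw [map_prod]
  have hq : ((Fin.last r : Fin (r+1)) : ℕ) = ((0 : Fin (r+1)) : ℕ) + (FreeMonoid.toList w).count 1 := by
    have := hdepth w hw
    rw [countY] at this
    simp [this]
  have hw' : w = FreeMonoid.ofList (FreeMonoid.toList w) := rfl
  conv_rhs => rw [hw']
  rw [mu_mono_entry (uu r) (FreeMonoid.toList w) 0 (Fin.last r) hq]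
  have h0 : (fun k => uu r (((0 : Fin (r+1)) : ℕ) + k)) = uu r := by
    funext k; simp
  have hc : (FreeMonoid.toList w).count 1 = r := hdepth w hw
  rw [h0, runProd_eq, hc, Finset.prod_range (fun j => uu r j ^ ((xr (FreeMonoid.toList w)).getD j 0))]
  apply Finset.prod_congr rfl
  intro j _
  rw [map_pow, MvPolynomial.aeval_X]
  rfl


lemma uu_rev (r : ℕ) (j : ℕ) (hj : j ≤ r) :
    MvPolynomial.rename (Fin.rev : Fin r → Fin r) (uu r j) = uu r r - uu r (r - j) := by
  rw [uu, map_sum]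
  simp only [MvPolynomial.rename_X]
  have key : ∑ i ∈ Finset.univ.filter (fun i : Fin r => (i : ℕ) < j), MvPolynomial.X (R := ℚ) (Fin.rev i)
      = ∑ i ∈ Finset.univ.filter (fun i : Fin r => ¬ ((i : ℕ) < r - j)), MvPolynomial.X i := by
    apply Finset.sum_nbij' (fun i => Fin.rev i) (fun i => Fin.rev i)
    · intro a ha
      simp only [Finset.mem_filter, Finset.mem_univ, true_and, Fin.val_rev] at ha ⊢
      have := a.isLt
      omega
    · intro a ha
      simp only [Finset.mem_filter, Finset.mem_univ, true_and, Fin.val_rev] at ha ⊢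
      have := a.isLt
      omega
    · intro a _; exact Fin.rev_rev a
    · intro a _; exact Fin.rev_rev a
    · intro a _; rfl
  rw [key]
  have huniv : (Finset.univ.filter (fun i : Fin r => (i : ℕ) < r)) = Finset.univ := by
    apply Finset.filter_true_of_mem
    intro i _; exact i.isLt
  have hsum := Finset.sum_filter_add_sum_filter_not (Finset.univ : Finset (Fin r))
    (fun i => (i : ℕ) < r - j) (fun i => MvPolynomial.X (R := ℚ) i)
  rw [uu, uu, huniv]
  rw [eq_sub_iff_add_eq, add_comm]
  exact hsum

theorem stmt15aux (n r : ℕ) (hr : 1 ≤ r) (f : R2)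
    (hf : f ∈ LieP) (hhom : IsHomog n f) (hdepth : IsDepth r f) :
    maOf r f = ((-1 : ℚ))^(r-1) • MvPolynomial.rename Fin.rev (maOf r f) := by
  by_cases hf0 : f = 0
  · subst hf0
    have : maOf r 0 = 0 := by
      rw [maOf, vimo, MonoidAlgebra.coeff_zero, Finsupp.sum_zero_index, map_zero]
    rw [this, map_zero, smul_zero]
  have hrn : r ≤ n := by
    obtain ⟨w, hw⟩ := (Finsupp.support_nonempty_iff (f := f.coeff)).mpr (by simpa using hf0)
    have h1 := hhom w hw
    have h2 := hdepth w hw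
    have h3 := List.count_le_length (a := 1) (l := FreeMonoid.toList w)
    rw [wlen] at h1; rw [countY] at h2
    omega
  set A := MvPolynomial (Fin r) ℚ with hA
  set v : Fin (r+1) → A := fun j => uu r (j : ℕ) with hv
  have base := maOf_eq_entry r f hdepth
  -- rename as matrix entry
  have hren : MvPolynomial.rename (Fin.rev : Fin r → Fin r) (maOf r f)
      = (mu (fun j => MvPolynomial.rename (Fin.rev : Fin r → Fin r) (v j)) f) 0 (Fin.last r) := by
    rw [base]
    have hcomp := congrArg (fun φ : R2 →ₐ[ℚ] Mat A r => φ f)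
      (mapMatrix_mu (MvPolynomial.rename (Fin.rev : Fin r → Fin r) : A →ₐ[ℚ] A) v)
    simp only [AlgHom.comp_apply, AlgHom.mapMatrix_apply] at hcomp
    rw [← hcomp, Matrix.map_apply]
  -- identify renamed values
  have hvr : (fun j : Fin (r+1) => MvPolynomial.rename (Fin.rev : Fin r → Fin r) (v j))
      = fun j : Fin (r+1) => (- uu r (r - (j : ℕ))) + uu r r := by
    funext j
    rw [hv]
    have := uu_rev r (j : ℕ) (by have := j.isLt; omega)
    rw [this, sub_eq_neg_add]
  -- translation step
  obtain ⟨t, ht⟩ := mu_translation (m := r) (fun j : Fin (r+1) => - uu r (r - (j : ℕ))) (uu r r) hf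
  -- negation + reversal steps
  have hwv : (fun j : Fin (r+1) => - uu r (r - (j : ℕ))) = fun j : Fin (r+1) => - v (Fin.rev j) := by
    funext j
    rw [hv]
    congr 2
    rw [Fin.val_rev]
    omega
  have hneg := congrArg (fun φ : R2 →ₐ[ℚ] Mat A r => φ f)
    (mu_neg (fun j : Fin (r+1) => v (Fin.rev j)))
  simp only [AlgHom.comp_apply] at hneg
  have hnu : hom2 (-X) Y f = ((-1:ℚ))^(n - r) • f := nu_homog hhom hdepth
  have hsig : hom2 (-X) (-Y) f = ((-1:ℚ))^n • f := sigma_homog hhom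
  have hrev := mu_reversal v hf
  -- entry bookkeeping
  have h0last : (0 : Fin (r+1)) ≠ Fin.last r := by
    intro h
    have := congrArg Fin.val h
    simp [Fin.last] at this
    omega
  -- assemble
  have step1 : MvPolynomial.rename (Fin.rev : Fin r → Fin r) (maOf r f)
      = (mu (fun j : Fin (r+1) => - v (Fin.rev j)) f) 0 (Fin.last r) := by
    rw [hren, hvr, ht, Matrix.add_apply, Matrix.smul_apply, Matrix.one_apply_ne h0last,
      smul_zero, add_zero, hwv]
  have step2 : (mu (fun j : Fin (r+1) => - v (Fin.rev j)) f) 0 (Fin.last r)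
      = ((-1:ℚ))^(n - r) • ((mu (fun j : Fin (r+1) => v (Fin.rev j)) f) 0 (Fin.last r)) := by
    rw [hneg, hnu, map_smul, Matrix.smul_apply]
  have step3 : (mu (fun j : Fin (r+1) => v (Fin.rev j)) f) 0 (Fin.last r)
      = - (((-1:ℚ))^n • ((mu v f) 0 (Fin.last r))) := by
    rw [hrev, hsig, map_smul]
    have : gam ((-1:ℚ)^n • mu v f) = ((-1:ℚ))^n • gam (mu v f) := rfl
    rw [this]
    rw [Matrix.neg_apply, Matrix.smul_apply]
    congr 1
    rw [gam_apply, Fin.rev_last, Fin.rev_zero]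
  rw [step1, step2, step3, ← base]
  simp only [smul_neg, smul_smul]
  have hsgn : ((-1:ℚ))^(r-1) * (((-1:ℚ))^(n-r) * ((-1:ℚ))^n) = -1 := by
    rw [← pow_add, ← pow_add]
    have he : (r - 1) + ((n - r) + n) = 2 * (n - 1) + 1 := by omega
    rw [he, pow_succ, pow_mul]
    simp
  rw [hsgn]
  simp


/-- Lemma A.2: if f ∈ Lie_n[x,y] is homogeneous of depth r ≥ 1,
    then mantar(ma_f) = ma_f, i.e. ma_f^r(u₁,…,u_r) = (−1)^{r−1}·ma_f^r(u_r,…,u₁). -/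
theorem stmt15 (n r : ℕ) (hr : 1 ≤ r) (f : R2)
    (hf : f ∈ LieP) (hhom : IsHomog n f) (hdepth : IsDepth r f) :
    maOf r f = ((-1 : ℚ))^(r-1) • MvPolynomial.rename Fin.rev (maOf r f) :=
  stmt15aux n r hr f hf hhom hdepth

end DblSh
end
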